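/- Let v1, v2, v3, v4 ∈ ℂ³ be vectors that are null with respect to the standard bilinear form (v·v = 0, where v·w = Σ v^a w^a), with all pairwise products v_i·v_j nonzero. Then ((v1·v2)(v3·v4))/((v1·v3)(v2·v4)) = r² and ((v1·v4)(v2·v3))/((v1·v3)(v2·v4)) = (1−r)², where r = ((v3·v4)[v1,v2,v3])/((v1·v3)[v2,v3,v4]) and [u,v,w] = ε_{abc}u^a v^b w^c is the determinant. -/

import Mathlib

/-- The complex bilinear dot product on `ℂ³` (no conjugation). -/
noncomputable def cdot (v w : Fin 3 → ℂ) : ℂ := ∑ a : Fin 3, v a * w a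

/-- The triple product `[u,v,w] = ε_{abc} u^a v^b w^c`, i.e. the determinant of the
matrix with rows `u, v, w`. -/
noncomputable def triple (u v w : Fin 3 → ℂ) : ℂ := Matrix.det (Matrix.of ![u, v, w])

lemma gram (u v w : Fin 3 → ℂ) :
    triple u v w ^ 2 =
      cdot u u * cdot v v * cdot w w - cdot u u * cdot v w ^ 2 - cdot w w * cdot u v ^ 2
        - cdot v v * cdot u w ^ 2 + 2 * cdot u v * cdot v w * cdot u w := by
  simp [cdot, triple, Matrix.det_fin_three, Fin.sum_univ_three]
  ring

lemma binet (v1 v2 v3 v4 : Fin 3 → ℂ) :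
    triple v1 v2 v3 * triple v2 v3 v4 =
      cdot v1 v4 * (cdot v2 v2 * cdot v3 v3 - cdot v2 v3 ^ 2)
        - cdot v1 v2 * (cdot v2 v4 * cdot v3 v3 - cdot v2 v3 * cdot v3 v4)
        + cdot v1 v3 * (cdot v2 v4 * cdot v2 v3 - cdot v2 v2 * cdot v3 v4) := by
  simp [cdot, triple, Matrix.det_fin_three, Fin.sum_univ_three]
  ring

/-- For four null vectors `v1, v2, v3, v4 ∈ ℂ³` with nonzero pairwise dot products and
`[v2,v3,v4] ≠ 0`, setting `r = ((v3·v4)[v1,v2,v3])/((v1·v3)[v2,v3,v4])`, one has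
`((v1·v2)(v3·v4))/((v1·v3)(v2·v4)) = r²` and `((v1·v4)(v2·v3))/((v1·v3)(v2·v4)) = (1−r)²`. -/
theorem stmt_2 (v1 v2 v3 v4 : Fin 3 → ℂ)
    (h1 : cdot v1 v1 = 0) (h2 : cdot v2 v2 = 0) (h3 : cdot v3 v3 = 0) (h4 : cdot v4 v4 = 0)
    (h12 : cdot v1 v2 ≠ 0) (h13 : cdot v1 v3 ≠ 0) (h14 : cdot v1 v4 ≠ 0)
    (h23 : cdot v2 v3 ≠ 0) (h24 : cdot v2 v4 ≠ 0) (h34 : cdot v3 v4 ≠ 0)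
    (hdet : triple v2 v3 v4 ≠ 0) :
    (cdot v1 v2 * cdot v3 v4) / (cdot v1 v3 * cdot v2 v4) =
      ((cdot v3 v4 * triple v1 v2 v3) / (cdot v1 v3 * triple v2 v3 v4)) ^ 2 ∧
    (cdot v1 v4 * cdot v2 v3) / (cdot v1 v3 * cdot v2 v4) =
      (1 - (cdot v3 v4 * triple v1 v2 v3) / (cdot v1 v3 * triple v2 v3 v4)) ^ 2 := by
  have I1 : triple v1 v2 v3 ^ 2 = 2 * cdot v1 v2 * cdot v2 v3 * cdot v1 v3 := by
    have h := gram v1 v2 v3; rw [h1, h2, h3] at h; linear_combination h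
  have I2 : triple v2 v3 v4 ^ 2 = 2 * cdot v2 v3 * cdot v3 v4 * cdot v2 v4 := by
    have h := gram v2 v3 v4; rw [h2, h3, h4] at h; linear_combination h
  have I3 : triple v1 v2 v3 * triple v2 v3 v4 =
      cdot v2 v3 * (cdot v1 v2 * cdot v3 v4 + cdot v1 v3 * cdot v2 v4
        - cdot v1 v4 * cdot v2 v3) := by
    have h := binet v1 v2 v3 v4; rw [h2, h3] at h; linear_combination h
  constructor
  · field_simp
    linear_combination (cdot v1 v2 * cdot v1 v3) * I2
      - (cdot v3 v4 * cdot v2 v4) * I1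
  · have hbQ : cdot v1 v3 * triple v2 v3 v4 ≠ 0 := mul_ne_zero h13 hdet
    have key : cdot v1 v4 * cdot v2 v3 * (cdot v1 v3 * triple v2 v3 v4) ^ 2 =
        cdot v1 v3 * cdot v2 v4 *
          (cdot v1 v3 * triple v2 v3 v4 - cdot v3 v4 * triple v1 v2 v3) ^ 2 := by
      linear_combination (cdot v1 v3 ^ 2 * cdot v1 v4 * cdot v2 v3
          - cdot v1 v3 ^ 3 * cdot v2 v4) * I2
        + (2 * cdot v1 v3 ^ 2 * cdot v2 v4 * cdot v3 v4) * I3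
        - (cdot v1 v3 * cdot v2 v4 * cdot v3 v4 ^ 2) * I1
    rw [show (1 - cdot v3 v4 * triple v1 v2 v3 / (cdot v1 v3 * triple v2 v3 v4)) =
        (cdot v1 v3 * triple v2 v3 v4 - cdot v3 v4 * triple v1 v2 v3) /
          (cdot v1 v3 * triple v2 v3 v4) from by field_simp,
      div_pow, div_eq_div_iff (mul_ne_zero h13 h24) (pow_ne_zero 2 hbQ)]
    linear_combination key
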